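/- For every n ≥ 1, every p ∈ [1, 2] and every τ ∈ (0,1), the modulus of smoothness of ℓ_p^n satisfies ρ_{ℓ_p^n}(τ) ≤ (1 + τ^p)^{1/p} − 1, and moreover (1 + τ^p)^{1/p} − 1 ≤ τ^p/p. -/
import Mathlib

open Real Finset

/-- Mean inequality for two terms. -/
lemma aux_mean2 (A B q : ℝ) (hA : 0 ≤ A) (hB : 0 ≤ B) (hq : 1 ≤ q) :
    A + B ≤ 2 * (((A ^ q + B ^ q) / 2) ^ (1 / q)) := by
  have h := Real.arith_mean_le_rpow_mean (Finset.univ : Finset (Fin 2))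
    ![1/2, 1/2] ![A, B] (by intro i _; fin_cases i <;> norm_num)
    (by simp [Fin.sum_univ_two]; norm_num)
    (by intro i _; fin_cases i <;> simpa) hq
  simp only [Fin.sum_univ_two, Matrix.cons_val_zero, Matrix.cons_val_one, Matrix.head_cons] at h
  have h2 : (1/2 : ℝ) * A + 1/2 * B = (A + B) / 2 := by ring
  have h3 : (1/2 : ℝ) * A ^ q + 1/2 * B ^ q = (A ^ q + B ^ q) / 2 := by ring
  rw [h2, h3] at h
  linarith

/-- Midpoint concavity of `t ↦ t^q` for `0 < q ≤ 1`. -/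
lemma aux_concave (s t q : ℝ) (hs : 0 ≤ s) (ht : 0 ≤ t) (hq0 : 0 < q) (hq1 : q ≤ 1) :
    s ^ q + t ^ q ≤ 2 * (((s + t) / 2) ^ q) := by
  have hQ : 1 ≤ 1 / q := (le_div_iff₀ hq0).2 (by linarith)
  have h := aux_mean2 (s ^ q) (t ^ q) (1 / q) (rpow_nonneg hs q) (rpow_nonneg ht q) hQ
  rw [← Real.rpow_mul hs, ← Real.rpow_mul ht, mul_one_div, div_self hq0.ne',
    Real.rpow_one, Real.rpow_one, one_div_one_div] at h
  exact h

/-- Subadditivity of `t ↦ t^q` for `0 ≤ q ≤ 1`. -/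
lemma aux_subadd (s t q : ℝ) (hs : 0 ≤ s) (ht : 0 ≤ t) (hq0 : 0 ≤ q) (hq1 : q ≤ 1) :
    (s + t) ^ q ≤ s ^ q + t ^ q := by
  have h := NNReal.rpow_add_le_add_rpow s.toNNReal t.toNNReal hq0 hq1
  have h' := NNReal.coe_le_coe.2 h
  rw [NNReal.coe_rpow, NNReal.coe_add, NNReal.coe_add, NNReal.coe_rpow, NNReal.coe_rpow,
    Real.coe_toNNReal _ hs, Real.coe_toNNReal _ ht] at h'
  exact h'

/-- Pointwise Clarkson inequality for `1 ≤ p ≤ 2`. -/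
lemma aux_clarkson (p : ℝ) (hp1 : 1 ≤ p) (hp2 : p ≤ 2) (a b : ℝ) :
    |a + b| ^ p + |a - b| ^ p ≤ 2 * (|a| ^ p + |b| ^ p) := by
  set q := p / 2 with hq
  have hq0 : 0 < q := by simp only [hq]; linarith
  have hq1 : q ≤ 1 := by simp only [hq]; linarith
  have key : ∀ c : ℝ, |c| ^ p = (c ^ 2) ^ q := by
    intro c
    rw [show p = 2 * q by simp [hq]; ring, Real.rpow_mul (abs_nonneg c), Real.rpow_two, sq_abs]
  calc |a + b| ^ p + |a - b| ^ p
      = ((a + b) ^ 2) ^ q + ((a - b) ^ 2) ^ q := by rw [key, key]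
    _ ≤ 2 * ((((a + b) ^ 2 + (a - b) ^ 2) / 2) ^ q) :=
        aux_concave _ _ _ (sq_nonneg _) (sq_nonneg _) hq0 hq1
    _ = 2 * ((a ^ 2 + b ^ 2) ^ q) := by rw [show ((a+b)^2+(a-b)^2)/2 = a^2+b^2 by ring]
    _ ≤ 2 * ((a ^ 2) ^ q + (b ^ 2) ^ q) := by
        have := aux_subadd (a ^ 2) (b ^ 2) q (sq_nonneg _) (sq_nonneg _) hq0.le hq1
        linarith
    _ = 2 * (|a| ^ p + |b| ^ p) := by rw [key, key]

/-- The `ℓ_p` norm on ℝⁿ, `‖x‖_p = (Σᵢ |xᵢ|^p)^{1/p}`. -/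
noncomputable def lpnorm (p : ℝ) (n : ℕ) (x : Fin n → ℝ) : ℝ :=
  (∑ i, |x i| ^ p) ^ (1 / p)

/-- For `p ∈ [1,2]` the modulus of smoothness of `ℓ_p^n` satisfies
`ρ(τ) ≤ (1 + τ^p)^{1/p} - 1`, and moreover `(1 + τ^p)^{1/p} - 1 ≤ τ^p / p` (the first
inequality stated pointwise over all pairs of unit vectors). -/
theorem stmt_15 (n : ℕ) (hn : 1 ≤ n) (p : ℝ) (hp1 : 1 ≤ p) (hp2 : p ≤ 2)
    (τ : ℝ) (hτ0 : 0 < τ) (hτ1 : τ < 1) :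
    (∀ x y : Fin n → ℝ, lpnorm p n x = 1 → lpnorm p n y = 1 →
      (1 / 2) * (lpnorm p n (x + τ • y) + lpnorm p n (x - τ • y) - 2)
        ≤ (1 + τ ^ p) ^ (1 / p) - 1) ∧
    (1 + τ ^ p) ^ (1 / p) - 1 ≤ τ ^ p / p := by
  have hp0 : (0:ℝ) < p := by linarith
  have hτp : (0:ℝ) ≤ τ ^ p := Real.rpow_nonneg hτ0.le p
  constructor
  · intro x y hx hy
    have snn : ∀ z : Fin n → ℝ, 0 ≤ ∑ i, |z i| ^ p := fun z =>
      Finset.sum_nonneg fun i _ => Real.rpow_nonneg (abs_nonneg _) p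
    have unit : ∀ z : Fin n → ℝ, lpnorm p n z = 1 → ∑ i, |z i| ^ p = 1 := by
      intro z hz
      have h1 : (∑ i, |z i| ^ p) ^ ((1/p) * p) = 1 := by
        rw [Real.rpow_mul (snn z)]
        unfold lpnorm at hz
        rw [hz, Real.one_rpow]
      rwa [one_div_mul_cancel hp0.ne', Real.rpow_one] at h1
    have hSx := unit x hx
    have hSy := unit y hy
    set SA := ∑ i, |(x + τ • y) i| ^ p with hSA
    set SB := ∑ i, |(x - τ • y) i| ^ p with hSB
    have hsum : SA + SB ≤ 2 * (1 + τ ^ p) := by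
      have hpt : ∀ i : Fin n, |(x + τ • y) i| ^ p + |(x - τ • y) i| ^ p
          ≤ 2 * (|x i| ^ p + τ ^ p * |y i| ^ p) := by
        intro i
        have h := aux_clarkson p hp1 hp2 (x i) (τ * y i)
        have habs : |τ * y i| ^ p = τ ^ p * |y i| ^ p := by
          rw [abs_mul, abs_of_pos hτ0, Real.mul_rpow hτ0.le (abs_nonneg _)]
        simp only [Pi.add_apply, Pi.sub_apply, Pi.smul_apply, smul_eq_mul]
        rw [← habs]
        exact h
      have h2 : SA + SB ≤ ∑ i, 2 * (|x i| ^ p + τ ^ p * |y i| ^ p) := by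
        rw [hSA, hSB, ← Finset.sum_add_distrib]
        exact Finset.sum_le_sum fun i _ => hpt i
      have h3 : ∑ i, 2 * (|x i| ^ p + τ ^ p * |y i| ^ p) = 2 * (1 + τ ^ p) := by
        simp only [mul_add, Finset.sum_add_distrib, ← Finset.mul_sum, hSx, hSy]
        ring
      linarith
    have hApB : lpnorm p n (x + τ • y) + lpnorm p n (x - τ • y)
        ≤ 2 * (1 + τ ^ p) ^ (1 / p) := by
      have hA : lpnorm p n (x + τ • y) = SA ^ (1/p) := rfl
      have hB : lpnorm p n (x - τ • y) = SB ^ (1/p) := rfl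
      have hAp : (SA ^ (1/p)) ^ p = SA := by
        rw [← Real.rpow_mul (snn _), one_div_mul_cancel hp0.ne', Real.rpow_one]
      have hBp : (SB ^ (1/p)) ^ p = SB := by
        rw [← Real.rpow_mul (snn _), one_div_mul_cancel hp0.ne', Real.rpow_one]
      have hmean := aux_mean2 (SA ^ (1/p)) (SB ^ (1/p)) p
        (Real.rpow_nonneg (snn _) _) (Real.rpow_nonneg (snn _) _) hp1
      rw [hAp, hBp] at hmean
      have hmono : ((SA + SB) / 2) ^ (1/p) ≤ (1 + τ ^ p) ^ (1/p) := by
        apply Real.rpow_le_rpow (by positivity) (by linarith) (by positivity)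
      rw [hA, hB]
      calc SA ^ (1/p) + SB ^ (1/p) ≤ 2 * (((SA + SB) / 2) ^ (1/p)) := hmean
        _ ≤ 2 * (1 + τ ^ p) ^ (1/p) := by linarith
    linarith
  · have hb := rpow_one_add_le_one_add_mul_self (s := τ ^ p) (by linarith)
      (p := 1/p) (by positivity) (by rw [div_le_one hp0]; linarith)
    calc (1 + τ ^ p) ^ (1/p) - 1 ≤ (1 + (1/p) * τ ^ p) - 1 := by linarith
      _ = τ ^ p / p := by ring
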